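/- arXiv:2310.13797 — 3 statements merged into one kernel-verified Lean document; each statement's English description precedes it below -/
import Mathlib

section
/- Suppose μ_0, μ_1 are probability measures on ℝ with positive densities, α_0 is a probability measure on ℝ, F_1 : ℝ → ℝ is increasing, and the relations μ_0 = (R_1 * F_1)_# α_0 and μ_1 = (F_1)_# (α_0 * R_1) hold, where R_1 * F_1 denotes convolution of the function F_1 with the standard Gaussian density. Then the CDF of α_0 satisfies the fixed-point equation G_{α_0} = G_{μ_0} ∘ (R_1 * (G_{μ_1}^{-1} ∘ (R_1 * G_{α_0}))). -/
open MeasureTheory ProbabilityTheory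

/-- Convolution of a function with the standard Gaussian density. -/
noncomputable def gaussConv (f : ℝ → ℝ) (x : ℝ) : ℝ :=
  ∫ z : ℝ, f (x - z) * gaussianPDFReal 0 1 z

/-- The quantile function of a measure. -/
noncomputable def quantileFun (μ : Measure ℝ) (u : ℝ) : ℝ :=
  sInf {y : ℝ | u ≤ cdf μ y}

open Set in
/-- The cdf of a measure with everywhere positive density is strictly monotone. -/
lemma strictMono_cdf_of_pos_density (μ : Measure ℝ) [IsProbabilityMeasure μ]
    (f : ℝ → ℝ) (hf : ∀ x, 0 < f x) (hfm : Measurable f)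
    (hμ : μ = volume.withDensity (fun x => ENNReal.ofReal (f x))) :
    StrictMono (fun x => (cdf μ x : ℝ)) := by
  intro a b hab
  have hIoc : 0 < μ (Ioc a b) := by
    rw [hμ, withDensity_apply _ measurableSet_Ioc]
    rw [pos_iff_ne_zero]
    intro h
    rw [lintegral_eq_zero_iff (hfm.ennreal_ofReal)] at h
    have h2 : ∀ᵐ x ∂(volume.restrict (Ioc a b)), False := by
      filter_upwards [h] with x hx
      have hx' : ENNReal.ofReal (f x) = 0 := hx
      rw [ENNReal.ofReal_eq_zero] at hx'
      exact absurd hx' (not_le.mpr (hf x))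
    have h3 : volume (Ioc a b) = 0 := by simpa using ae_iff.mp h2
    rw [Real.volume_Ioc, ENNReal.ofReal_eq_zero] at h3
    linarith
  have key : μ (Iic a) + μ (Ioc a b) = μ (Iic b) := by
    rw [← measure_union (Set.Iic_disjoint_Ioc le_rfl) measurableSet_Ioc,
      Set.Iic_union_Ioc_eq_Iic hab.le]
  have hfin : μ (Iic a) ≠ ⊤ := measure_ne_top μ _
  have hfin2 : μ (Iic b) ≠ ⊤ := measure_ne_top μ _
  show (cdf μ a : ℝ) < cdf μ b
  rw [cdf_eq_real, cdf_eq_real, measureReal_def, measureReal_def]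
  have : μ (Iic a) < μ (Iic b) := by
    rw [← key]
    exact ENNReal.lt_add_right hfin (ne_of_gt hIoc)
  exact ENNReal.toReal_strict_mono hfin2 this

/-- Quantile is a left inverse of a strictly monotone cdf. -/
lemma quantileFun_cdf (μ : Measure ℝ) (hsm : StrictMono (fun x => (cdf μ x : ℝ))) (t : ℝ) :
    quantileFun μ (cdf μ t) = t := by
  unfold quantileFun
  have : {y : ℝ | (cdf μ t : ℝ) ≤ cdf μ y} = Set.Ici t := by
    ext y
    simp only [Set.mem_setOf_eq, Set.mem_Ici]
    exact ⟨fun h => by by_contra hc; exact absurd h (not_le.mpr (hsm (not_le.mp hc))),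
      fun h => (hsm.monotone h : _)⟩
  rw [this, csInf_Ici]

/-- cdf of a pushforward under a strictly monotone map. -/
lemma cdf_map_strictMono (α : Measure ℝ) [IsProbabilityMeasure α] (h : ℝ → ℝ)
    (hsm : StrictMono h) (x : ℝ) :
    (cdf (Measure.map h α) (h x) : ℝ) = cdf α x := by
  have hm : Measurable h := hsm.monotone.measurable
  have : IsProbabilityMeasure (Measure.map h α) := Measure.isProbabilityMeasure_map hm.aemeasurable
  rw [cdf_eq_real, cdf_eq_real, measureReal_def, measureReal_def, Measure.map_apply hm measurableSet_Iic]
  have hpre : h ⁻¹' Set.Iic (h x) = Set.Iic x := by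
    ext y; simp [hsm.le_iff_le]
  rw [hpre]

/-- The cdf of the convolution with the standard Gaussian is the Gaussian convolution of
the cdf. -/
lemma cdf_conv_gaussian (α : Measure ℝ) [IsProbabilityMeasure α] (y : ℝ) :
    (cdf (Measure.conv α (gaussianReal 0 1)) y : ℝ)
      = gaussConv (fun w => (cdf α w : ℝ)) y := by
  have hcdfm : Measurable (fun w => (cdf α w : ℝ)) := (monotone_cdf (μ := α)).measurable
  have hconv : Measure.conv α (gaussianReal 0 1)
      = Measure.conv (gaussianReal 0 1) α := Measure.conv_comm _ _
  have : IsProbabilityMeasure (Measure.conv α (gaussianReal 0 1)) := by infer_instance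
  rw [cdf_eq_real, measureReal_def]
  have happly : Measure.conv α (gaussianReal 0 1) (Set.Iic y)
      = ∫⁻ z, ENNReal.ofReal (gaussianPDFReal 0 1 z * (cdf α (y - z) : ℝ)) := by
    rw [hconv]
    unfold Measure.conv
    rw [Measure.map_apply measurable_add measurableSet_Iic]
    have hpre : (fun p : ℝ × ℝ => p.1 + p.2) ⁻¹' Set.Iic y
        = {p : ℝ × ℝ | p.2 ∈ Set.Iic (y - p.1)} := by
      ext p
      simp only [Set.mem_preimage, Set.mem_Iic, Set.mem_setOf_eq]
      constructor <;> intro hp <;> linarith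
    rw [hpre, Measure.prod_apply]
    · have hval : ∀ z : ℝ, α (Prod.mk z ⁻¹' {p : ℝ × ℝ | p.2 ∈ Set.Iic (y - p.1)})
          = ENNReal.ofReal ((cdf α (y - z) : ℝ)) := by
        intro z
        have : Prod.mk z ⁻¹' {p : ℝ × ℝ | p.2 ∈ Set.Iic (y - p.1)} = Set.Iic (y - z) := by
          ext a; simp
        rw [this, ofReal_cdf]
      simp_rw [hval]
      rw [gaussianReal_of_var_ne_zero 0 one_ne_zero,
        lintegral_withDensity_eq_lintegral_mul _ (measurable_gaussianPDF 0 1)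
          (by exact (hcdfm.comp (measurable_const.sub measurable_id)).ennreal_ofReal)]
      congr 1
      ext z
      simp only [Pi.mul_apply, gaussianPDF]
      rw [← ENNReal.ofReal_mul (gaussianPDFReal_nonneg 0 1 z)]
    · exact measurableSet_le measurable_snd (measurable_const.sub measurable_fst)
  rw [happly]
  unfold gaussConv
  rw [MeasureTheory.integral_eq_lintegral_of_nonneg_ae]
  · congr 1
    apply lintegral_congr
    intro z
    rw [mul_comm]
  · filter_upwards with z
    exact mul_nonneg (cdf_nonneg α (y - z)) (gaussianPDFReal_nonneg 0 1 z)
  · exact ((hcdfm.comp (measurable_const.sub measurable_id)).mul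
      (measurable_gaussianPDFReal 0 1)).aestronglyMeasurable

/-- Gaussian convolution of a strictly monotone integrable function is strictly monotone. -/
lemma strictMono_gaussConv (F : ℝ → ℝ) (hF : StrictMono F)
    (hint : ∀ x : ℝ, Integrable (fun z => F (x - z) * gaussianPDFReal 0 1 z)) :
    StrictMono (gaussConv F) := by
  intro a b hab
  have hsub : gaussConv F b - gaussConv F a
      = ∫ z : ℝ, (F (b - z) * gaussianPDFReal 0 1 z - F (a - z) * gaussianPDFReal 0 1 z) := by
    rw [integral_sub (hint b) (hint a)]
    rfl
  have hpos : 0 < ∫ z : ℝ, (F (b - z) * gaussianPDFReal 0 1 z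
      - F (a - z) * gaussianPDFReal 0 1 z) := by
    rw [integral_pos_iff_support_of_nonneg]
    · have : Function.support (fun z => F (b - z) * gaussianPDFReal 0 1 z
          - F (a - z) * gaussianPDFReal 0 1 z) = Set.univ := by
        ext z
        simp only [Function.mem_support, Set.mem_univ, iff_true]
        have h1 : F (a - z) < F (b - z) := hF (by linarith)
        have h2 : 0 < gaussianPDFReal 0 1 z := gaussianPDFReal_pos 0 1 z one_ne_zero
        nlinarith
      rw [this]
      simp
    · intro z
      have h1 : F (a - z) ≤ F (b - z) := (hF (by linarith : a - z < b - z)).le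
      have h2 : 0 ≤ gaussianPDFReal 0 1 z := gaussianPDFReal_nonneg 0 1 z
      simp only [Pi.zero_apply]
      nlinarith
    · exact (hint b).sub (hint a)
  linarith [hsub ▸ hpos]

/-- If `μ_0 = (R_1 * F_1)_# α_0` and `μ_1 = (F_1)_# (α_0 * R_1)` with `μ_0, μ_1` having
positive densities and `F_1` increasing, then the CDF of `α_0` satisfies the fixed-point
equation `G_{α_0} = G_{μ_0} ∘ (R_1 * (G_{μ_1}⁻¹ ∘ (R_1 * G_{α_0})))`. -/
theorem mpms_fixed_point (μ0 μ1 α0 : Measure ℝ)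
    [IsProbabilityMeasure μ0] [IsProbabilityMeasure μ1] [IsProbabilityMeasure α0]
    (f0 f1 : ℝ → ℝ) (hf0 : ∀ x, 0 < f0 x) (hf1 : ∀ x, 0 < f1 x)
    (hf0m : Measurable f0) (hf1m : Measurable f1)
    (hμ0 : μ0 = volume.withDensity (fun x => ENNReal.ofReal (f0 x)))
    (hμ1 : μ1 = volume.withDensity (fun x => ENNReal.ofReal (f1 x)))
    (F1 : ℝ → ℝ) (hF1 : StrictMono F1)
    (hint : ∀ x : ℝ, Integrable (fun z => F1 (x - z) * gaussianPDFReal 0 1 z))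
    (hpush0 : μ0 = Measure.map (gaussConv F1) α0)
    (hpush1 : μ1 = Measure.map F1 (Measure.conv α0 (gaussianReal 0 1)))
    (hint' : ∀ x : ℝ, Integrable (fun z =>
        quantileFun μ1 (gaussConv (fun y => (cdf α0 y : ℝ)) (x - z)) * gaussianPDFReal 0 1 z)) :
    ∀ x : ℝ, (cdf α0 x : ℝ)
      = cdf μ0 (gaussConv (fun y => quantileFun μ1 (gaussConv (fun w => (cdf α0 w : ℝ)) y)) x) := by
  intro x
  have hμ1sm : StrictMono (fun t => (cdf μ1 t : ℝ)) :=
    strictMono_cdf_of_pos_density μ1 f1 hf1 hf1m hμ1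
  -- key: the inner function equals F1
  have hkey : ∀ y : ℝ, quantileFun μ1 (gaussConv (fun w => (cdf α0 w : ℝ)) y) = F1 y := by
    intro y
    have h1 : gaussConv (fun w => (cdf α0 w : ℝ)) y
        = (cdf (Measure.conv α0 (gaussianReal 0 1)) y : ℝ) := (cdf_conv_gaussian α0 y).symm
    have h2 : (cdf (Measure.conv α0 (gaussianReal 0 1)) y : ℝ) = cdf μ1 (F1 y) := by
      rw [hpush1]
      exact (cdf_map_strictMono (Measure.conv α0 (gaussianReal 0 1)) F1 hF1 y).symm
    rw [h1, h2]
    exact quantileFun_cdf μ1 hμ1sm (F1 y)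
  have hconv_eq : gaussConv (fun y => quantileFun μ1 (gaussConv (fun w => (cdf α0 w : ℝ)) y)) x
      = gaussConv F1 x := by
    have hfun : (fun y => quantileFun μ1 (gaussConv (fun w => (cdf α0 w : ℝ)) y)) = F1 :=
      funext hkey
    rw [hfun]
  rw [hconv_eq, hpush0]
  exact (cdf_map_strictMono α0 (gaussConv F1) (strictMono_gaussConv F1 hF1 hint) x).symm
end

section
/- Let μ be a probability measure on ℝ and φ, φ̃ : ℝ → ℝ be two increasing maps. Set α = φ_# μ and α̃ = φ̃_# μ. Then W^∞(α, α̃) ≤ ‖φ − φ̃‖_{L^∞(supp μ)}. Moreover, if φ = G_{α}^{-1}∘G_μ and φ̃ = G_{α̃}^{-1}∘G_μ with μ atomless and α, α̃ having positive densities, then equality W^∞(α, α̃) = ‖φ − φ̃‖_{L^∞(supp μ)} holds. -/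
open MeasureTheory ProbabilityTheory
open scoped ENNReal

/-- The infinity-Wasserstein distance: infimum over couplings of the essential supremum of
the distance between the coordinates. -/
noncomputable def Winf (α β : Measure ℝ) : ℝ≥0∞ :=
  ⨅ π ∈ {π : Measure (ℝ × ℝ) |
      Measure.map Prod.fst π = α ∧ Measure.map Prod.snd π = β},
    essSup (fun p : ℝ × ℝ => edist p.1 p.2) π

open Set Filter Topology

section Aux

variable (ν : Measure ℝ) [IsProbabilityMeasure ν]

lemma qset_nonempty {u : ℝ} (hu : u < 1) : {y : ℝ | u ≤ cdf ν y}.Nonempty := by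
  obtain ⟨y, hy⟩ := ((tendsto_cdf_atTop ν).eventually (eventually_ge_nhds hu)).exists
  exact ⟨y, hy⟩

lemma qset_bddBelow {u : ℝ} (hu : 0 < u) : BddBelow {y : ℝ | u ≤ cdf ν y} := by
  obtain ⟨b, hb⟩ := ((tendsto_cdf_atBot ν).eventually (eventually_lt_nhds hu)).exists
  refine ⟨b, fun y hy => ?_⟩
  by_contra h
  push_neg at h
  exact absurd (le_trans hy (monotone_cdf ν h.le)) (not_le.mpr hb)

lemma quantileFun_le {u : ℝ} (hu : 0 < u) {y : ℝ} (hy : u ≤ cdf ν y) :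
    quantileFun ν u ≤ y :=
  csInf_le (qset_bddBelow ν hu) hy

lemma le_cdf_quantileFun {u : ℝ} (hu0 : 0 < u) (hu1 : u < 1) :
    u ≤ cdf ν (quantileFun ν u) := by
  have hne := qset_nonempty ν hu1
  have key : ∀ y ∈ Ioi (quantileFun ν u), u ≤ cdf ν y := by
    intro y hy
    obtain ⟨z, hz, hzy⟩ := exists_lt_of_csInf_lt hne hy
    exact hz.trans (monotone_cdf ν hzy.le)
  have htend : Tendsto (cdf ν) (𝓝[>] (quantileFun ν u)) (𝓝 (cdf ν (quantileFun ν u))) :=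
    ((cdf ν).right_continuous _).tendsto.mono_left
      (nhdsWithin_mono _ Ioi_subset_Ici_self)
  exact ge_of_tendsto htend (eventually_nhdsWithin_of_forall key)

lemma quantileFun_le_iff {u : ℝ} (hu0 : 0 < u) (hu1 : u < 1) {y : ℝ} :
    quantileFun ν u ≤ y ↔ u ≤ cdf ν y :=
  ⟨fun h => (le_cdf_quantileFun ν hu0 hu1).trans (monotone_cdf ν h),
   fun h => quantileFun_le ν hu0 h⟩

lemma continuous_cdf_of_noAtoms [NullSingletonClass ν] : Continuous (cdf ν) := by
  rw [continuous_iff_continuousAt]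
  intro x
  rw [(monotone_cdf ν).continuousAt_iff_leftLim_eq_rightLim, (cdf ν).rightLim_eq]
  have h := (cdf ν).measure_singleton x
  rw [measure_cdf, measure_singleton] at h
  have h2 : cdf ν x - Function.leftLim (cdf ν) x ≤ 0 :=
    ENNReal.ofReal_eq_zero.mp h.symm
  have h3 : Function.leftLim (cdf ν) x ≤ cdf ν x := (monotone_cdf ν).leftLim_le le_rfl
  linarith

lemma measure_cdf_le_zero [NullSingletonClass ν] : ν {x | cdf ν x ≤ 0} = 0 := by
  have hcont := continuous_cdf_of_noAtoms ν
  set S := {x | cdf ν x ≤ 0} with hS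
  rcases S.eq_empty_or_nonempty with h | hne
  · simp [h]
  · have hclosed : IsClosed S := isClosed_le hcont continuous_const
    have hbdd : BddAbove S := by
      obtain ⟨c, hc⟩ := ((tendsto_cdf_atTop ν).eventually (eventually_gt_nhds one_pos)).exists
      refine ⟨c, fun y hy => ?_⟩
      by_contra h
      push_neg at h
      exact absurd ((monotone_cdf ν h.le).trans hy) (not_le.mpr hc)
    have hs : sSup S ∈ S := hclosed.csSup_mem hne hbdd
    have hsub : S ⊆ Iic (sSup S) := fun y hy => le_csSup hbdd hy
    have : ν S ≤ ν (Iic (sSup S)) := measure_mono hsub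
    rw [← ofReal_cdf ν (sSup S), ENNReal.ofReal_eq_zero.mpr hs] at this
    exact le_antisymm this zero_le

lemma measure_one_le_cdf [NullSingletonClass ν] : ν {x | 1 ≤ cdf ν x} = 0 := by
  have hcont := continuous_cdf_of_noAtoms ν
  set S := {x | 1 ≤ cdf ν x} with hS
  rcases S.eq_empty_or_nonempty with h | hne
  · simp [h]
  · have hclosed : IsClosed S := isClosed_le continuous_const hcont
    have hbdd : BddBelow S := by
      obtain ⟨c, hc⟩ := ((tendsto_cdf_atBot ν).eventually (eventually_lt_nhds one_pos)).exists
      refine ⟨c, fun y hy => ?_⟩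
      by_contra h
      push_neg at h
      exact absurd (hy.trans (monotone_cdf ν h.le)) (not_le.mpr hc)
    have hs : sInf S ∈ S := hclosed.csInf_mem hne hbdd
    have hsub : S ⊆ Ici (sInf S) := fun y hy => csInf_le hbdd hy
    have hcdf : cdf ν (sInf S) = 1 := le_antisymm (cdf_le_one ν _) hs
    have hIic : ν (Iic (sInf S)) = 1 := by
      rw [← ofReal_cdf ν (sInf S), hcdf, ENNReal.ofReal_one]
    have hIoi : ν (Ioi (sInf S)) = 0 := by
      rw [← compl_Iic, measure_compl measurableSet_Iic (measure_ne_top ν _), hIic,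
        measure_univ, tsub_self]
    have hIci : ν (Ici (sInf S)) = 0 := by
      rw [← measure_congr (Ioi_ae_eq_Ici (μ := ν) (a := sInf S))]
      exact hIoi
    exact le_antisymm (le_trans (measure_mono hsub) hIci.le) zero_le

lemma ae_cdf_mem_Ioo [NullSingletonClass ν] : ∀ᵐ x ∂ν, cdf ν x ∈ Ioo (0 : ℝ) 1 := by
  have h0 : ∀ᵐ x ∂ν, 0 < cdf ν x := by
    rw [ae_iff]
    simpa [not_lt] using measure_cdf_le_zero ν
  have h1 : ∀ᵐ x ∂ν, cdf ν x < 1 := by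
    rw [ae_iff]
    simpa [not_lt] using measure_one_le_cdf ν
  filter_upwards [h0, h1] with x hx0 hx1
  exact ⟨hx0, hx1⟩

/-- Probability integral transform: the distribution function of `cdf ν` under `ν` is uniform. -/
lemma measure_cdf_le [NullSingletonClass ν] {u : ℝ} (h0 : 0 ≤ u) (h1 : u ≤ 1) :
    ν {x | cdf ν x ≤ u} = ENNReal.ofReal u := by
  have hcont := continuous_cdf_of_noAtoms ν
  rcases h0.eq_or_lt with h | hu0
  · rw [← h, ENNReal.ofReal_zero]
    exact measure_cdf_le_zero ν
  rcases h1.eq_or_lt with h | hu1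
  · have : {x | cdf ν x ≤ u} = univ := eq_univ_of_forall fun x => h ▸ cdf_le_one ν x
    rw [this, measure_univ, h, ENNReal.ofReal_one]
  set S := {x | cdf ν x ≤ u} with hS
  have hne : S.Nonempty := by
    obtain ⟨b, hb⟩ := ((tendsto_cdf_atBot ν).eventually (eventually_lt_nhds hu0)).exists
    exact ⟨b, hb.le⟩
  have hclosed : IsClosed S := isClosed_le hcont continuous_const
  have hbdd : BddAbove S := by
    obtain ⟨c, hc⟩ := ((tendsto_cdf_atTop ν).eventually (eventually_gt_nhds hu1)).exists
    refine ⟨c, fun y hy => ?_⟩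
    by_contra h
    push_neg at h
    exact absurd ((monotone_cdf ν h.le).trans hy) (not_le.mpr hc)
  have hs : sSup S ∈ S := hclosed.csSup_mem hne hbdd
  have hSeq : S = Iic (sSup S) := by
    apply Subset.antisymm (fun y hy => le_csSup hbdd hy)
    intro y hy
    exact le_trans (monotone_cdf ν hy) hs
  have hcdf : cdf ν (sSup S) = u := by
    refine le_antisymm hs ?_
    by_contra h
    push_neg at h
    have hev : ∀ᶠ y in 𝓝[>] (sSup S), cdf ν y < u :=
      ((hcont.continuousAt.eventually_lt_const h).filter_mono nhdsWithin_le_nhds)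
    obtain ⟨y, hy1, hy2⟩ := (hev.and self_mem_nhdsWithin).exists
    exact absurd (le_csSup hbdd hy1.le) (not_le.mpr hy2)
  rw [hSeq, ← ofReal_cdf ν (sSup S), hcdf]

end Aux

/-- The monotone quantile map pushes `μ` forward onto `α`. -/
lemma map_quantile_cdf (μ α : Measure ℝ) [IsProbabilityMeasure μ] [IsProbabilityMeasure α]
    [NullSingletonClass μ] (hmono : Monotone (fun x => quantileFun α (cdf μ x))) :
    Measure.map (fun x => quantileFun α (cdf μ x)) μ = α := by
  haveI : IsProbabilityMeasure (Measure.map (fun x => quantileFun α (cdf μ x)) μ) :=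
    Measure.isProbabilityMeasure_map hmono.measurable.aemeasurable
  refine Measure.ext_of_Iic _ _ (fun t => ?_)
  rw [Measure.map_apply hmono.measurable measurableSet_Iic]
  have hae : ((fun x => quantileFun α (cdf μ x)) ⁻¹' Iic t) =ᵐ[μ] {x | cdf μ x ≤ cdf α t} := by
    rw [Filter.eventuallyEq_set]
    filter_upwards [ae_cdf_mem_Ioo μ] with x hx
    simpa [Set.mem_preimage, Set.mem_Iic, Set.mem_setOf_eq] using
      quantileFun_le_iff α hx.1 hx.2 (y := t)
  rw [measure_congr hae, measure_cdf_le μ (cdf_nonneg α t) (cdf_le_one α t), ofReal_cdf]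

/-- From a coupling concentrated on `{edist ≤ W}`, cdf domination with shift `W`. -/
lemma coupling_cdf_le {π : Measure (ℝ × ℝ)} {β γ : Measure ℝ}
    (hfst : Measure.map Prod.fst π = β) (hsnd : Measure.map Prod.snd π = γ)
    {W : ℝ≥0∞} (hW : W ≠ ⊤) (h1 : ∀ᵐ p ∂π, edist p.1 p.2 ≤ W) (t : ℝ) :
    β (Iic t) ≤ γ (Iic (t + W.toReal)) := by
  have hβ : β (Iic t) = π (Prod.fst ⁻¹' Iic t) := by
    rw [← hfst, Measure.map_apply measurable_fst measurableSet_Iic]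
  have hγ : γ (Iic (t + W.toReal)) = π (Prod.snd ⁻¹' Iic (t + W.toReal)) := by
    rw [← hsnd, Measure.map_apply measurable_snd measurableSet_Iic]
  rw [hβ, hγ]
  set B := {p : ℝ × ℝ | edist p.1 p.2 ≤ W} with hB
  have hBc : π Bᶜ = 0 := by
    rw [ae_iff] at h1
    simpa [hB, Set.compl_setOf] using h1
  have hsub : Prod.fst ⁻¹' Iic t ∩ B ⊆ Prod.snd ⁻¹' Iic (t + W.toReal) := by
    rintro ⟨x, y⟩ ⟨hx, hxy⟩
    simp only [Set.mem_preimage, Set.mem_Iic] at hx ⊢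
    have hd : dist x y ≤ W.toReal := by
      simp only [hB, Set.mem_setOf_eq, edist_dist] at hxy
      exact (ENNReal.ofReal_le_iff_le_toReal hW).mp hxy
    have : y - x ≤ |y - x| := le_abs_self _
    rw [abs_sub_comm, ← Real.dist_eq] at this
    linarith
  calc π (Prod.fst ⁻¹' Iic t)
      ≤ π (Prod.fst ⁻¹' Iic t ∩ B) + π (Prod.fst ⁻¹' Iic t \ B) :=
        measure_le_inter_add_diff π _ B
    _ ≤ π (Prod.snd ⁻¹' Iic (t + W.toReal)) + 0 := by
        refine add_le_add (measure_mono hsub) ?_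
        exact le_trans (measure_mono (fun p hp => hp.2)) hBc.le
    _ = π (Prod.snd ⁻¹' Iic (t + W.toReal)) := add_zero _

/-- Lower bound: the essential sup of the distance of quantile maps bounds below any coupling. -/
lemma essSup_quantile_le_coupling (μ α αt : Measure ℝ) [IsProbabilityMeasure μ]
    [IsProbabilityMeasure α] [IsProbabilityMeasure αt] [NullSingletonClass μ]
    (π : Measure (ℝ × ℝ)) (hfst : Measure.map Prod.fst π = α)
    (hsnd : Measure.map Prod.snd π = αt) :
    essSup (fun x => edist (quantileFun α (cdf μ x)) (quantileFun αt (cdf μ x))) μ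
      ≤ essSup (fun p : ℝ × ℝ => edist p.1 p.2) π := by
  set W := essSup (fun p : ℝ × ℝ => edist p.1 p.2) π with hWdef
  rcases eq_or_ne W ⊤ with h | hW
  · rw [h]; exact le_top
  have h1 : ∀ᵐ p ∂π, edist p.1 p.2 ≤ W := ae_le_essSup
  have hc1 : ∀ t, α (Iic t) ≤ αt (Iic (t + W.toReal)) := coupling_cdf_le hfst hsnd hW h1
  -- the swapped coupling
  have hmeasB : MeasurableSet {p : ℝ × ℝ | edist p.1 p.2 ≤ W} :=
    measurableSet_le measurable_edist measurable_const
  have hswf : Measure.map Prod.fst (Measure.map Prod.swap π) = αt := by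
    rw [Measure.map_map measurable_fst measurable_swap]
    exact hsnd
  have hsws : Measure.map Prod.snd (Measure.map Prod.swap π) = α := by
    rw [Measure.map_map measurable_snd measurable_swap]
    exact hfst
  have h1' : ∀ᵐ p ∂(Measure.map Prod.swap π), edist p.1 p.2 ≤ W := by
    rw [ae_map_iff measurable_swap.aemeasurable hmeasB]
    filter_upwards [h1] with p hp
    simpa [edist_comm] using hp
  have hc2 : ∀ t, αt (Iic t) ≤ α (Iic (t + W.toReal)) := coupling_cdf_le hswf hsws hW h1'
  have hcdf1 : ∀ t, cdf α t ≤ cdf αt (t + W.toReal) := fun t => by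
    rw [cdf_eq_real, cdf_eq_real]
    exact ENNReal.toReal_mono (measure_ne_top _ _) (hc1 t)
  have hcdf2 : ∀ t, cdf αt t ≤ cdf α (t + W.toReal) := fun t => by
    rw [cdf_eq_real, cdf_eq_real]
    exact ENNReal.toReal_mono (measure_ne_top _ _) (hc2 t)
  refine essSup_le_of_ae_le W ?_
  filter_upwards [ae_cdf_mem_Ioo μ] with x hx
  set u := cdf μ x with hu
  have q1 : quantileFun α u ≤ quantileFun αt u + W.toReal :=
    quantileFun_le α hx.1 (le_trans (le_cdf_quantileFun αt hx.1 hx.2) (hcdf2 _))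
  have q2 : quantileFun αt u ≤ quantileFun α u + W.toReal :=
    quantileFun_le αt hx.1 (le_trans (le_cdf_quantileFun α hx.1 hx.2) (hcdf1 _))
  have hWnn : (0 : ℝ) ≤ W.toReal := ENNReal.toReal_nonneg
  have habs : |quantileFun α u - quantileFun αt u| ≤ W.toReal :=
    abs_le.mpr ⟨by linarith, by linarith⟩
  calc edist (quantileFun α u) (quantileFun αt u)
      = ENNReal.ofReal |quantileFun α u - quantileFun αt u| := by
        rw [edist_dist, Real.dist_eq]
    _ ≤ ENNReal.ofReal W.toReal := ENNReal.ofReal_le_ofReal habs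
    _ = W := ENNReal.ofReal_toReal hW

/-- Upper bound: the monotone coupling witnesses `W∞ ≤ essSup`. -/
lemma winf_le_essSup (μ : Measure ℝ) [IsProbabilityMeasure μ] (φ φt : ℝ → ℝ)
    (hφ : Monotone φ) (hφt : Monotone φt) :
    Winf (Measure.map φ μ) (Measure.map φt μ)
      ≤ essSup (fun x => edist (φ x) (φt x)) μ := by
  have hm : Measurable (fun x => (φ x, φt x)) := hφ.measurable.prodMk hφt.measurable
  have h1 : Measure.map Prod.fst (Measure.map (fun x => (φ x, φt x)) μ)
      = Measure.map φ μ := by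
    rw [Measure.map_map measurable_fst hm]
    rfl
  have h2 : Measure.map Prod.snd (Measure.map (fun x => (φ x, φt x)) μ)
      = Measure.map φt μ := by
    rw [Measure.map_map measurable_snd hm]
    rfl
  have key : essSup (fun p : ℝ × ℝ => edist p.1 p.2) (Measure.map (fun x => (φ x, φt x)) μ)
      = essSup (fun x => edist (φ x) (φt x)) μ := by
    rw [essSup_map_measure measurable_edist.aemeasurable hm.aemeasurable]
    rfl
  exact key ▸ iInf₂_le _ ⟨h1, h2⟩

/-- For increasing maps `φ, φ̃` and `α = φ_#μ`, `α̃ = φ̃_#μ`, one has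
`W^∞(α, α̃) ≤ ‖φ − φ̃‖_{L^∞(supp μ)}` (the essential supremum w.r.t. `μ`); moreover, if
`φ, φ̃` are the monotone (quantile) transport maps from an atomless `μ` onto measures with
positive densities, then equality holds. -/
theorem winf_pushforward_bound_and_monotone_equality (μ : Measure ℝ)
    [IsProbabilityMeasure μ] (φ φt : ℝ → ℝ)
    (hφ : Monotone φ) (hφt : Monotone φt) :
    Winf (Measure.map φ μ) (Measure.map φt μ)
      ≤ essSup (fun x => edist (φ x) (φt x)) μ ∧
    (∀ (α αt : Measure ℝ), IsProbabilityMeasure α → IsProbabilityMeasure αt →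
      NoAtoms μ →
      (∃ f : ℝ → ℝ, (∀ x, 0 < f x) ∧ Measurable f ∧
        α = volume.withDensity (fun x => ENNReal.ofReal (f x))) →
      (∃ g : ℝ → ℝ, (∀ x, 0 < g x) ∧ Measurable g ∧
        αt = volume.withDensity (fun x => ENNReal.ofReal (g x))) →
      φ = (fun x => quantileFun α (cdf μ x)) →
      φt = (fun x => quantileFun αt (cdf μ x)) →
      Winf α αt = essSup (fun x => edist (φ x) (φt x)) μ) := by
  refine ⟨winf_le_essSup μ φ φt hφ hφt, ?_⟩
  intro α αt hα hαt hNA _ _ hφe hφte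
  haveI := hα; haveI := hαt; haveI : NullSingletonClass μ := hNA
  subst hφe hφte
  have hmα : Measure.map (fun x => quantileFun α (cdf μ x)) μ = α :=
    map_quantile_cdf μ α hφ
  have hmαt : Measure.map (fun x => quantileFun αt (cdf μ x)) μ = αt :=
    map_quantile_cdf μ αt hφt
  refine le_antisymm ?_ ?_
  · calc Winf α αt
        = Winf (Measure.map (fun x => quantileFun α (cdf μ x)) μ)
            (Measure.map (fun x => quantileFun αt (cdf μ x)) μ) := by rw [hmα, hmαt]
      _ ≤ _ := winf_le_essSup μ _ _ hφ hφt
  · refine le_iInf₂ fun π hπ => ?_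
    exact essSup_quantile_le_coupling μ α αt π hπ.1 hπ.2
end

section
/- Let u : [0,T]×ℝ → ℝ be a bounded C^{1,2} solution of the backward linear parabolic equation ∂_t u + a(t,x) ∂_{xx}u + b(t,x) ∂_x u = 0 on [0,T]×ℝ, where a ≥ λ > 0 and a, b are bounded and continuous. Then ‖u(0,·)‖_{L^∞(ℝ)} ≤ ‖u(T,·)‖_{L^∞(ℝ)}. -/
open Set Filter Real Topology

/-- If `f` has positive derivative at `x`, then `f y > f x` for `y` slightly to the right. -/
lemma slope_pos_right {f : ℝ → ℝ} {d x : ℝ} (hf : HasDerivAt f d x) (hd : 0 < d) :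
    ∀ᶠ y in 𝓝[>] x, f x < f y := by
  have h := hasDerivAt_iff_tendsto_slope.1 hf
  have h2 : ∀ᶠ y in 𝓝[≠] x, 0 < slope f x y := h.eventually (eventually_gt_nhds hd)
  have h3 : ∀ᶠ y in 𝓝[>] x, 0 < slope f x y :=
    h2.filter_mono (nhdsWithin_mono x (fun y hy => ne_of_gt hy))
  filter_upwards [h3, self_mem_nhdsWithin] with y hy hy'
  have hxy : 0 < y - x := sub_pos.2 hy'
  have := mul_pos hy hxy
  rw [slope_def_field, div_mul_cancel₀ _ (ne_of_gt hxy)] at this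
  linarith

/-- One-sided first derivative test: max on the right forces nonpositive derivative. -/
lemma deriv_nonpos_of_max_right {f : ℝ → ℝ} {d t T : ℝ} (hf : HasDerivAt f d t) (ht : t < T)
    (hmax : ∀ s ∈ Set.Icc t T, f s ≤ f t) : d ≤ 0 := by
  by_contra hd
  push_neg at hd
  have h1 := slope_pos_right hf hd
  have h2 : ∀ᶠ y in 𝓝[>] t, y < T :=
    eventually_nhdsWithin_of_eventually_nhds (eventually_lt_nhds ht)
  have h3 : ∀ᶠ y in 𝓝[>] t, f t < f y ∧ y < T ∧ t < y := by
    filter_upwards [h1, h2, self_mem_nhdsWithin] with y a b c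
    exact ⟨a, b, c⟩
  obtain ⟨y, hfy, hyT, hty⟩ := h3.exists
  exact absurd (hmax y ⟨hty.le, hyT.le⟩) (not_le.2 hfy)

/-- Second derivative test at a global max. -/
lemma second_deriv_test {f g : ℝ → ℝ} {x d : ℝ} (hf : ∀ y, HasDerivAt f (g y) y)
    (hg : HasDerivAt g d x) (hmax : ∀ y, f y ≤ f x) : d ≤ 0 := by
  have hgx : g x = 0 :=
    (IsLocalMax.hasDerivAt_eq_zero (Filter.Eventually.of_forall hmax) (hf x))
  by_contra hd
  push_neg at hd
  have h1 : ∀ᶠ y in 𝓝[>] x, 0 < g y := by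
    have := slope_pos_right hg hd
    filter_upwards [this] with y hy
    rw [hgx] at hy; exact hy
  obtain ⟨c, hc, hsub⟩ := mem_nhdsGT_iff_exists_Ioo_subset.1 h1
  have hxc : x < c := hc
  have hmono : StrictMonoOn f (Set.Icc x c) := by
    apply strictMonoOn_of_deriv_pos (convex_Icc x c)
    · exact (Continuous.continuousOn (by
        exact continuous_iff_continuousAt.2 fun y => (hf y).continuousAt))
    · intro y hy
      rw [interior_Icc] at hy
      rw [(hf y).deriv]
      exact hsub hy
  have : f x < f c := hmono (Set.left_mem_Icc.2 hxc.le) (Set.right_mem_Icc.2 hxc.le) hxc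
  exact absurd (hmax c) (not_le.2 this)

lemma backward_key (T lam : ℝ) (hT : 0 < T) (hlam : 0 < lam)
    (u ut ux uxx : ℝ → ℝ → ℝ) (a b : ℝ → ℝ → ℝ)
    (hu_cont : Continuous (fun p : ℝ × ℝ => u p.1 p.2))
    (ha_lb : ∀ t ∈ Set.Icc 0 T, ∀ x : ℝ, lam ≤ a t x)
    (ha_bd : ∃ Ca : ℝ, ∀ t ∈ Set.Icc 0 T, ∀ x : ℝ, |a t x| ≤ Ca)
    (hb_bd : ∃ Cb : ℝ, ∀ t ∈ Set.Icc 0 T, ∀ x : ℝ, |b t x| ≤ Cb)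
    (hu_bd : ∃ C : ℝ, ∀ t ∈ Set.Icc 0 T, ∀ x : ℝ, |u t x| ≤ C)
    (hut : ∀ t ∈ Set.Icc 0 T, ∀ x : ℝ, HasDerivAt (fun s => u s x) (ut t x) t)
    (hux : ∀ t ∈ Set.Icc 0 T, ∀ x : ℝ, HasDerivAt (fun y => u t y) (ux t x) x)
    (huxx : ∀ t ∈ Set.Icc 0 T, ∀ x : ℝ, HasDerivAt (fun y => ux t y) (uxx t x) x)
    (hpde : ∀ t ∈ Set.Icc 0 T, ∀ x : ℝ,
      ut t x + a t x * uxx t x + b t x * ux t x = 0) :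
    ∀ x0 : ℝ, u 0 x0 ≤ ⨆ x : ℝ, |u T x| := by
  obtain ⟨C, hC⟩ := hu_bd
  obtain ⟨Ca, hCa⟩ := ha_bd
  obtain ⟨Cb, hCb⟩ := hb_bd
  have hT0 : (0:ℝ) ∈ Set.Icc 0 T := ⟨le_refl 0, hT.le⟩
  have hTT : T ∈ Set.Icc 0 T := ⟨hT.le, le_refl T⟩
  have hC0 : 0 ≤ C := (abs_nonneg _).trans (hC 0 hT0 0)
  have hCa0 : 0 ≤ Ca := (abs_nonneg _).trans (hCa 0 hT0 0)
  have hCb0 : 0 ≤ Cb := (abs_nonneg _).trans (hCb 0 hT0 0)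
  set M := ⨆ x : ℝ, |u T x| with hM
  have hbdd : BddAbove (Set.range fun x : ℝ => |u T x|) := by
    refine ⟨C, ?_⟩
    rintro _ ⟨x, rfl⟩
    exact hC T hTT x
  have hMub : ∀ x : ℝ, u T x ≤ M := fun x => (le_abs_self _).trans (le_ciSup hbdd x)
  intro x0
  -- suffices to show `u 0 x0 ≤ M + δ * cosh x0` for every `δ > 0`
  have key : ∀ δ : ℝ, 0 < δ → u 0 x0 ≤ M + δ * Real.cosh x0 := by
    intro δ hδ
    set K := Ca + Cb + 1 with hKdef
    have hK : 0 < K := by linarith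
    set v : ℝ → ℝ → ℝ := fun t x => u t x - δ * Real.exp (-K * t) * Real.cosh x with hv
    -- continuity of v as a function of the pair
    have hVcont : Continuous (fun p : ℝ × ℝ => v p.1 p.2) := by
      apply hu_cont.sub
      exact ((continuous_const.mul (Real.continuous_exp.comp
        (continuous_const.mul continuous_fst))).mul (Real.continuous_cosh.comp continuous_snd))
    -- time derivative of v
    have hVt : ∀ t ∈ Set.Icc 0 T, ∀ x : ℝ, HasDerivAt (fun s => v s x)
        (ut t x + δ * K * Real.exp (-K * t) * Real.cosh x) t := by
      intro t ht x
      have h1 : HasDerivAt (fun s : ℝ => -K * s) (-K) t := by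
        simpa using (hasDerivAt_id t).const_mul (-K)
      have h2 : HasDerivAt (fun s => Real.exp (-K * s)) (Real.exp (-K * t) * (-K)) t :=
        (Real.hasDerivAt_exp (-K * t)).comp t h1
      have h3 : HasDerivAt (fun s => δ * Real.exp (-K * s) * Real.cosh x)
          (δ * (Real.exp (-K * t) * (-K)) * Real.cosh x) t :=
        (h2.const_mul δ).mul_const (Real.cosh x)
      have h4 := (hut t ht x).sub h3
      exact h4.congr_deriv (by ring)
    -- choose R for the compact localization
    set R := (2 * C + δ + 1) * Real.exp (K * T) / δ with hR
    have hRpos : 0 < R := by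
      apply div_pos _ hδ
      exact mul_pos (by linarith) (Real.exp_pos _)
    -- max over the compact box
    set Kc : Set (ℝ × ℝ) := Set.Icc 0 T ×ˢ Set.Icc (-R) R with hKc
    have hKcomp : IsCompact Kc := isCompact_Icc.prod isCompact_Icc
    have hKne : Kc.Nonempty :=
      ⟨(0, 0), ⟨hT0, ⟨by show -R ≤ (0:ℝ); linarith, by show (0:ℝ) ≤ R; linarith⟩⟩⟩
    obtain ⟨p, hpK, hpmax⟩ := hKcomp.exists_isMaxOn hKne hVcont.continuousOn
    obtain ⟨hpt, hpx⟩ := hpK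
    -- the max over the box is a global max over the strip
    have hglob : ∀ t ∈ Set.Icc 0 T, ∀ x : ℝ, v t x ≤ v p.1 p.2 := by
      intro t ht x
      by_cases hx : |x| ≤ R
      · exact hpmax (Set.mk_mem_prod ht (abs_le.mp hx))
      · push_neg at hx
        have hx0 : v t x < v t 0 := by
          have hcosh : R ≤ Real.cosh x := by
            have h1 : Real.cosh R ≤ Real.cosh x := by
              rw [Real.cosh_le_cosh]
              rw [abs_of_pos hRpos]
              exact hx.le
            have h2 : R ≤ Real.cosh R := by
              have := Real.self_le_sinh_iff.mpr hRpos.le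
              have := Real.sinh_lt_cosh R
              linarith
            linarith
          have hut1 : u t x ≤ C := (le_abs_self _).trans (hC t ht x)
          have hut2 : -C ≤ u t 0 := (neg_le_of_abs_le (hC t ht 0))
          have he1 : Real.exp (-K * T) ≤ Real.exp (-K * t) := by
            apply Real.exp_le_exp.mpr
            nlinarith [ht.2]
          have he2 : Real.exp (-K * t) ≤ 1 := by
            apply Real.exp_le_one_iff.mpr
            nlinarith [ht.1]
          have hcosh0 : Real.cosh (0:ℝ) = 1 := Real.cosh_zero
          have hbig : 2 * C + δ + 1 ≤ δ * Real.exp (-K * t) * Real.cosh x := by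
            have hexp : Real.exp (-(K * T)) * Real.exp (K * T) = 1 := by
              rw [← Real.exp_add]; simp
            have hid : δ * Real.exp (-K * T) * R = 2 * C + δ + 1 := by
              rw [hR, show -K * T = -(K * T) by ring, mul_div_assoc', div_eq_iff hδ.ne']
              linear_combination (2 * C + δ + 1) * δ * hexp
            have s1 : δ * Real.exp (-K * T) * R ≤ δ * Real.exp (-K * T) * Real.cosh x :=
              mul_le_mul_of_nonneg_left hcosh (by positivity)
            have s2 : δ * Real.exp (-K * T) * Real.cosh x ≤
                δ * Real.exp (-K * t) * Real.cosh x :=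
              mul_le_mul_of_nonneg_right (mul_le_mul_of_nonneg_left he1 hδ.le)
                (Real.cosh_pos x).le
            linarith
          have hsmall : δ * Real.exp (-K * t) * Real.cosh (0:ℝ) ≤ δ := by
            rw [hcosh0]
            nlinarith [Real.exp_pos (-K*t)]
          simp only [hv]
          nlinarith
        have h0 : v t 0 ≤ v p.1 p.2 :=
          hpmax (Set.mk_mem_prod ht (by constructor <;> linarith))
        linarith
    -- the max is attained at t = T
    have htstar : p.1 = T := by
      by_contra hne
      have htlt : p.1 < T := lt_of_le_of_ne hpt.2 hne
      -- time derivative nonpositive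
      have hvt_le : ut p.1 p.2 + δ * K * Real.exp (-K * p.1) * Real.cosh p.2 ≤ 0 := by
        apply deriv_nonpos_of_max_right (hVt p.1 hpt p.2) htlt
        intro s hs
        exact hglob s ⟨hpt.1.trans hs.1, hs.2⟩ p.2
      -- spatial first derivative vanishes
      have hvx_eq : ux p.1 p.2 - δ * Real.exp (-K * p.1) * Real.sinh p.2 = 0 := by
        apply IsLocalMax.hasDerivAt_eq_zero
        · exact Filter.Eventually.of_forall (fun y => hglob p.1 hpt y)
        · exact (hux p.1 hpt p.2).sub
            ((Real.hasDerivAt_cosh p.2).const_mul (δ * Real.exp (-K * p.1)))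
      -- spatial second derivative nonpositive
      have hvxx_le : uxx p.1 p.2 - δ * Real.exp (-K * p.1) * Real.cosh p.2 ≤ 0 := by
        apply second_deriv_test (g := fun y => ux p.1 y - δ * Real.exp (-K * p.1) * Real.sinh y)
        · intro y
          exact (hux p.1 hpt y).sub
            ((Real.hasDerivAt_cosh y).const_mul (δ * Real.exp (-K * p.1)))
        · exact (huxx p.1 hpt p.2).sub
            ((Real.hasDerivAt_sinh p.2).const_mul (δ * Real.exp (-K * p.1)))
        · exact fun y => hglob p.1 hpt y
      -- combine with the PDE to get a contradiction
      have hE : ut p.1 p.2 + δ * K * Real.exp (-K * p.1) * Real.cosh p.2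
          + a p.1 p.2 * (uxx p.1 p.2 - δ * Real.exp (-K * p.1) * Real.cosh p.2)
          + b p.1 p.2 * (ux p.1 p.2 - δ * Real.exp (-K * p.1) * Real.sinh p.2)
          = δ * Real.exp (-K * p.1) *
            (K * Real.cosh p.2 - a p.1 p.2 * Real.cosh p.2 - b p.1 p.2 * Real.sinh p.2) := by
        have := hpde p.1 hpt p.2
        ring_nf
        ring_nf at this
        linarith
      have hEpos : 0 < δ * Real.exp (-K * p.1) *
          (K * Real.cosh p.2 - a p.1 p.2 * Real.cosh p.2 - b p.1 p.2 * Real.sinh p.2) := by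
        have ha' : a p.1 p.2 ≤ Ca := (le_abs_self _).trans (hCa p.1 hpt p.2)
        have hb' : |b p.1 p.2 * Real.sinh p.2| ≤ Cb * Real.cosh p.2 := by
          rw [abs_mul]
          apply mul_le_mul (hCb p.1 hpt p.2) _ (abs_nonneg _) hCb0
          rw [Real.abs_sinh]
          calc Real.sinh |p.2| ≤ Real.cosh |p.2| := (Real.sinh_lt_cosh _).le
          _ = Real.cosh p.2 := Real.cosh_abs p.2
        have hb'' : b p.1 p.2 * Real.sinh p.2 ≤ Cb * Real.cosh p.2 :=
          (le_abs_self _).trans hb'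
        have hcosh1 : 1 ≤ Real.cosh p.2 := Real.one_le_cosh p.2
        apply mul_pos (mul_pos hδ (Real.exp_pos _))
        have : (K - Ca - Cb) * Real.cosh p.2 ≤
            K * Real.cosh p.2 - a p.1 p.2 * Real.cosh p.2 - b p.1 p.2 * Real.sinh p.2 := by
          nlinarith
        have hK1 : K - Ca - Cb = 1 := by rw [hKdef]; ring
        nlinarith
      have hEneg : ut p.1 p.2 + δ * K * Real.exp (-K * p.1) * Real.cosh p.2
          + a p.1 p.2 * (uxx p.1 p.2 - δ * Real.exp (-K * p.1) * Real.cosh p.2)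
          + b p.1 p.2 * (ux p.1 p.2 - δ * Real.exp (-K * p.1) * Real.sinh p.2) ≤ 0 := by
        have h1 : a p.1 p.2 * (uxx p.1 p.2 - δ * Real.exp (-K * p.1) * Real.cosh p.2) ≤ 0 :=
          mul_nonpos_of_nonneg_of_nonpos (hlam.le.trans (ha_lb p.1 hpt p.2)) hvxx_le
        rw [hvx_eq]
        simp only [mul_zero]
        linarith
      rw [hE] at hEneg
      linarith
    -- conclude
    have h1 : v 0 x0 ≤ v p.1 p.2 := hglob 0 hT0 x0
    have h2 : v p.1 p.2 ≤ M := by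
      rw [htstar]
      have : v T p.2 ≤ u T p.2 := by
        simp only [hv]
        have h5 : 0 < δ * Real.exp (-K * T) * Real.cosh p.2 :=
          mul_pos (mul_pos hδ (Real.exp_pos _)) (Real.cosh_pos p.2)
        linarith
      exact this.trans (hMub p.2)
    have h3 : v 0 x0 = u 0 x0 - δ * Real.cosh x0 := by
      simp [hv]
    linarith
  -- let δ → 0
  by_contra hcon
  push_neg at hcon
  set ε := u 0 x0 - M with hε
  have hε0 : 0 < ε := by linarith
  have hcosh : 0 < Real.cosh x0 := lt_of_lt_of_le one_pos (Real.one_le_cosh x0)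
  have h3 := key (ε / (2 * Real.cosh x0)) (by positivity)
  have h4 : ε / (2 * Real.cosh x0) * Real.cosh x0 = ε / 2 := by
    field_simp
  rw [h4] at h3
  linarith



/-- Maximum principle for a backward linear parabolic equation on `[0,T] × ℝ`: for a
bounded `C^{1,2}` solution of `∂_t u + a ∂_{xx}u + b ∂_x u = 0` with `a ≥ λ > 0` and
`a, b` bounded continuous, `‖u(0,·)‖_∞ ≤ ‖u(T,·)‖_∞`. -/
theorem backward_parabolic_maximum_principle (T lam : ℝ) (hT : 0 < T) (hlam : 0 < lam)
    (u ut ux uxx : ℝ → ℝ → ℝ) (a b : ℝ → ℝ → ℝ)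
    (hu_cont : Continuous (fun p : ℝ × ℝ => u p.1 p.2))
    (ha_cont : Continuous (fun p : ℝ × ℝ => a p.1 p.2))
    (hb_cont : Continuous (fun p : ℝ × ℝ => b p.1 p.2))
    (ha_lb : ∀ t ∈ Set.Icc 0 T, ∀ x : ℝ, lam ≤ a t x)
    (ha_bd : ∃ Ca : ℝ, ∀ t ∈ Set.Icc 0 T, ∀ x : ℝ, |a t x| ≤ Ca)
    (hb_bd : ∃ Cb : ℝ, ∀ t ∈ Set.Icc 0 T, ∀ x : ℝ, |b t x| ≤ Cb)
    (hu_bd : ∃ C : ℝ, ∀ t ∈ Set.Icc 0 T, ∀ x : ℝ, |u t x| ≤ C)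
    (hut : ∀ t ∈ Set.Icc 0 T, ∀ x : ℝ, HasDerivAt (fun s => u s x) (ut t x) t)
    (hux : ∀ t ∈ Set.Icc 0 T, ∀ x : ℝ, HasDerivAt (fun y => u t y) (ux t x) x)
    (huxx : ∀ t ∈ Set.Icc 0 T, ∀ x : ℝ, HasDerivAt (fun y => ux t y) (uxx t x) x)
    (hpde : ∀ t ∈ Set.Icc 0 T, ∀ x : ℝ,
      ut t x + a t x * uxx t x + b t x * ux t x = 0) :
    (⨆ x : ℝ, |u 0 x|) ≤ ⨆ x : ℝ, |u T x| := by
  have hpos := backward_key T lam hT hlam u ut ux uxx a b hu_cont ha_lb ha_bd hb_bd hu_bd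
    hut hux huxx hpde
  have hneg := backward_key T lam hT hlam (fun t x => -(u t x)) (fun t x => -(ut t x))
    (fun t x => -(ux t x)) (fun t x => -(uxx t x)) a b hu_cont.neg ha_lb ha_bd hb_bd
    (by obtain ⟨C, hC⟩ := hu_bd; exact ⟨C, fun t ht x => by rw [abs_neg]; exact hC t ht x⟩)
    (fun t ht x => (hut t ht x).neg) (fun t ht x => (hux t ht x).neg)
    (fun t ht x => (huxx t ht x).neg)
    (fun t ht x => by have := hpde t ht x; ring_nf; ring_nf at this; linarith)
  have hiSup_neg : (⨆ x : ℝ, |-(u T x)|) = ⨆ x : ℝ, |u T x| := by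
    simp only [abs_neg]
  rw [hiSup_neg] at hneg
  apply ciSup_le
  intro x
  rw [abs_le]
  constructor
  · have := hneg x
    simp only [neg_le] at this ⊢
    linarith
  · exact hpos x
end
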